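/- Let 𝕋 be a generator set of R, let A ⊆ Fin n be nonempty, and let ψ ∈ R. Then the equivalence class of ψ under ∼_A equals the orbit of ψ under the operator set O_A, i.e. {φ ∈ R | φ|_A = ψ|_A} = {P ψ | P ∈ O_A}. -/

import Mathlib

open Finset

/-- Restriction of a computational basis state `ψ : Fin n → Bool` to a subsystem `A`. -/
def restrict {n : ℕ} (ψ : Fin n → Bool) (A : Finset (Fin n)) : {x // x ∈ A} → Bool :=
  fun a => ψ a.1

/-- The quotient set `R/∼_A`: the set of equivalence classes of the relation
`ψ ∼_A φ ↔ ψ|_A = φ|_A` on `R`. -/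
def classes {n : ℕ} (R : Finset (Fin n → Bool)) (A : Finset (Fin n)) :
    Set (Set (Fin n → Bool)) :=
  {C | ∃ ψ ∈ R, C = {φ | φ ∈ R ∧ restrict φ A = restrict ψ A}}

/-- `A₁ ∼_R A₂`: the unordered pairs of quotient sets coincide. -/
def simR {n : ℕ} (R : Finset (Fin n → Bool)) (A₁ A₂ : Finset (Fin n)) : Prop :=
  ({classes R A₁, classes R A₁ᶜ} : Set (Set (Set (Fin n → Bool)))) =
    {classes R A₂, classes R A₂ᶜ}

/-- `G(𝕋)`: the set of all finite compositions of elements of `T`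
(the empty composition being the identity). -/
def Gset {α : Type*} (T : Set (α → α)) : Set (α → α) :=
  {P | ∃ l : List (α → α), (∀ f ∈ l, f ∈ T) ∧ P = l.foldr (· ∘ ·) id}

/-- `𝕋` is a generator set of `R`: it contains the identity, finite compositions of its
elements commute, it acts transitively on `R`, and it is locally invariant. -/
def IsGenSet {n : ℕ} (R : Finset (Fin n → Bool))
    (T : Set ({ψ // ψ ∈ R} → {ψ // ψ ∈ R})) : Prop :=
  id ∈ T ∧
  (∀ P ∈ Gset T, ∀ Q ∈ Gset T, P ∘ Q = Q ∘ P) ∧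
  (∀ ψ φ : {ψ // ψ ∈ R}, ∃ P ∈ Gset T, P ψ = φ) ∧
  (∀ P ∈ T, ∀ A : Finset (Fin n), A.Nonempty →
    (∃ ψ : {ψ // ψ ∈ R}, restrict (↑(P ψ)) A = restrict (↑ψ) A) →
    ∀ φ : {ψ // ψ ∈ R}, restrict (↑(P φ)) A = restrict (↑φ) A)

/-- The operator set `O_A` of a subsystem `A` (for `A = ∅` this is all of `G(𝕋)`). -/
def opSet {n : ℕ} (R : Finset (Fin n → Bool))
    (T : Set ({ψ // ψ ∈ R} → {ψ // ψ ∈ R})) (A : Finset (Fin n)) :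
    Set ({ψ // ψ ∈ R} → {ψ // ψ ∈ R}) :=
  {P | P ∈ Gset T ∧ ∀ ψ : {ψ // ψ ∈ R}, restrict (↑(P ψ)) A = restrict (↑ψ) A}

/-- the equivalence class of `ψ` under `∼_A` equals the orbit of `ψ`
under the operator set `O_A`. -/
theorem class_eq_orbit {n : ℕ} (R : Finset (Fin n → Bool)) (hR : R.Nonempty)
    (T : Set ({ψ // ψ ∈ R} → {ψ // ψ ∈ R})) (hT : IsGenSet R T)
    (A : Finset (Fin n)) (hA : A.Nonempty) (ψ : {ψ // ψ ∈ R}) :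
    {φ : {ψ // ψ ∈ R} | restrict (↑φ) A = restrict (↑ψ) A} =
      {φ : {ψ // ψ ∈ R} | ∃ P ∈ opSet R T A, P ψ = φ} := by
  -- Key lemma: every P ∈ Gset T acts on each coordinate by a uniform xor.
  have key : ∀ l : List ({ψ // ψ ∈ R} → {ψ // ψ ∈ R}), (∀ f ∈ l, f ∈ T) →
      ∀ a : Fin n, ∃ b : Bool,
        ∀ χ : {ψ // ψ ∈ R}, (↑(l.foldr (· ∘ ·) id χ) : Fin n → Bool) a = xor b (χ.1 a) := by
    intro l hl a
    induction l with
    | nil => exact ⟨false, fun χ => by simp⟩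
    | cons f t ih =>
      obtain ⟨b, hb⟩ := ih (fun g hg => hl g (List.mem_cons_of_mem f hg))
      have hf : f ∈ T := hl f List.mem_cons_self
      have hfa : ∃ bf : Bool, ∀ χ : {ψ // ψ ∈ R}, (↑(f χ) : Fin n → Bool) a = xor bf (χ.1 a) := by
        by_cases h : ∃ χ : {ψ // ψ ∈ R}, restrict (↑(f χ)) {a} = restrict (↑χ) {a}
        · refine ⟨false, fun χ => ?_⟩
          have := hT.2.2.2 f hf {a} (Finset.singleton_nonempty a) h χ
          have := congrFun this ⟨a, Finset.mem_singleton_self a⟩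
          simpa [_root_.restrict] using this
        · refine ⟨true, fun χ => ?_⟩
          by_contra hc
          apply h
          refine ⟨χ, funext fun x => ?_⟩
          obtain ⟨x, hx⟩ := x
          have hxa : x = a := Finset.mem_singleton.mp hx
          subst hxa
          simp only [_root_.restrict]
          cases h1 : (↑(f χ) : Fin n → Bool) x <;> cases h2 : χ.1 x <;>
            simp_all [Bool.xor_true]
      obtain ⟨bf, hbf⟩ := hfa
      refine ⟨xor bf b, fun χ => ?_⟩
      have : (t.foldr (· ∘ ·) id) χ = ((f :: t).foldr (· ∘ ·) id χ) |> fun _ => True := trivial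
      show (↑(f ((t.foldr (· ∘ ·) id) χ)) : Fin n → Bool) a = _
      rw [hbf, hb, Bool.xor_assoc]
  ext φ
  simp only [Set.mem_setOf_eq]
  constructor
  · intro hφ
    obtain ⟨Q, hQ, hQψ⟩ := hT.2.2.1 ψ φ
    refine ⟨Q, ⟨hQ, ?_⟩, hQψ⟩
    obtain ⟨l, hl, rfl⟩ := hQ
    intro χ
    funext x
    obtain ⟨x, hx⟩ := x
    obtain ⟨b, hb⟩ := key l hl x
    have hψ : xor b (ψ.1 x) = ψ.1 x := by
      have h1 := hb ψ
      rw [hQψ] at h1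
      have h2 := congrFun hφ ⟨x, hx⟩
      simp only [_root_.restrict] at h2
      rw [← h1, h2]
    have hbfalse : b = false := by
      cases b <;> simp_all
    simp only [_root_.restrict, hb χ, hbfalse, Bool.false_xor]
  · rintro ⟨P, ⟨hPG, hPfix⟩, rfl⟩
    exact hPfix ψ
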